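/- Let g be a nonzero element of the completed symmetric coalgebra C_𝔪 = S(V)⊗̂𝔪 ⊕ k·1 satisfying Δg = ((I+τ)/2)(g⊗g), where τ is the signed flip. If g = g₊ + g₋ is the decomposition into even and odd components, then Δ(g₊) = g₊⊗g₊ and Δ(g₋) = g₋⊗g₊ + g₊⊗g₋. -/
import Mathlib


open scoped TensorProduct

noncomputable section

/-- The signed flip `τ(v⊗w) = (−1)^{|v||w|} w⊗v` on `C ⊗ C`, expressed through the
parity involution `σ` of `C`. -/
def tauC {k C : Type} [Field k] [Ring C] [Algebra k C] (σ : C →ₗ[k] C) :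
    C ⊗[k] C →ₗ[k] C ⊗[k] C :=
  let S : C ⊗[k] C →ₗ[k] C ⊗[k] C := (TensorProduct.comm k C C).toLinearMap
  (2 : k)⁻¹ • (S
    + (TensorProduct.map σ LinearMap.id).comp S
    + (TensorProduct.map LinearMap.id σ).comp S
    - (TensorProduct.map σ σ).comp S)

/-- If `g` is a nonzero super-grouplike element of the completed symmetric
coalgebra `C_𝔪 = S(V)⊗̂𝔪 ⊕ k·1`, i.e. `Δg = ((I+τ)/2)(g⊗g)`, and `g = g₊ + g₋`
is its decomposition into even and odd components (w.r.t. the parity involution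
`σ`), then `Δ(g₊) = g₊⊗g₊` and `Δ(g₋) = g₋⊗g₊ + g₊⊗g₋`. -/
theorem superGrouplike_even_odd_components
    (k C : Type) [Field k] [CharZero k] [Ring C] [Algebra k C]
    (σ : C →ₗ[k] C) (hσ : ∀ x, σ (σ x) = x)
    (Δ : C →ₗ[k] C ⊗[k] C)
    -- Δ commutes with the parity involution (it is a graded map) :
    (hΔσ : ∀ x : C, Δ (σ x) = TensorProduct.map σ σ (Δ x))
    (g : C) (hg0 : g ≠ 0)
    (hsg : Δ g = (2 : k)⁻¹ • (g ⊗ₜ g + tauC σ (g ⊗ₜ g)))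
    (gp gm : C)
    (hgp : σ gp = gp)           -- even component
    (hgm : σ gm = - gm)         -- odd component
    (hdec : g = gp + gm) :
    Δ gp = gp ⊗ₜ gp ∧ Δ gm = gm ⊗ₜ gp + gp ⊗ₜ gm := by
  have hσg : σ g = gp - gm := by
    rw [hdec, map_add, hgp, hgm]; abel
  have hτval : tauC σ (g ⊗ₜ[k] g)
      = (2 : k)⁻¹ • (g ⊗ₜ g + (σ g) ⊗ₜ g + g ⊗ₜ (σ g) - (σ g) ⊗ₜ (σ g)) := by
    simp [tauC, LinearMap.sub_apply, LinearMap.add_apply]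
  have key : Δ g = gp ⊗ₜ gp + gp ⊗ₜ gm + gm ⊗ₜ gp := by
    rw [hsg, hτval, hσg, hdec]
    simp only [TensorProduct.add_tmul, TensorProduct.tmul_add,
      TensorProduct.sub_tmul, TensorProduct.tmul_sub]
    module
  have hΔσg : Δ (σ g) = gp ⊗ₜ gp - gp ⊗ₜ gm - gm ⊗ₜ gp := by
    rw [hΔσ, key]
    simp [hgp, hgm, TensorProduct.tmul_neg, TensorProduct.neg_tmul]
    abel
  have hgp' : gp = (2 : k)⁻¹ • (g + σ g) := by
    rw [hσg, hdec]
    have : gp + gm + (gp - gm) = (2 : k) • gp := by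
      rw [two_smul]; abel
    rw [this, smul_smul, inv_mul_cancel₀ (two_ne_zero), one_smul]
  have hgm' : gm = (2 : k)⁻¹ • (g - σ g) := by
    rw [hσg, hdec]
    have : gp + gm - (gp - gm) = (2 : k) • gm := by
      rw [two_smul]; abel
    rw [this, smul_smul, inv_mul_cancel₀ (two_ne_zero), one_smul]
  constructor
  · conv_lhs => rw [hgp', map_smul, map_add, key, hΔσg]
    have : gp ⊗ₜ gp + gp ⊗ₜ gm + gm ⊗ₜ gp + (gp ⊗ₜ gp - gp ⊗ₜ gm - gm ⊗ₜ gp)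
        = (2 : k) • (gp ⊗ₜ[k] gp) := by rw [two_smul]; abel
    rw [this, smul_smul, inv_mul_cancel₀ (two_ne_zero), one_smul]
  · conv_lhs => rw [hgm', map_smul, map_sub, key, hΔσg]
    have : gp ⊗ₜ gp + gp ⊗ₜ gm + gm ⊗ₜ gp - (gp ⊗ₜ gp - gp ⊗ₜ gm - gm ⊗ₜ gp)
        = (2 : k) • (gm ⊗ₜ[k] gp + gp ⊗ₜ[k] gm) := by
      rw [two_smul]; abel
    rw [this, smul_smul, inv_mul_cancel₀ (two_ne_zero), one_smul]
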